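/- Fix m ≥ 1 and a ℚ-vector space M. With C_k and ρ_k as above (alternating-sign face maps on functions from k-subsets of {1,…,m} to M), define h_k : C_k → C_{k-1} by h(ω)_J = Σ_{i ∉ J} (-1)^{|{r ∈ J : r > i}|} ω_{J ∪ {i}}. Then for every 1 ≤ k ≤ m-1, the complex is exact at C_k: ker(ρ_k) = im(ρ_{k-1}). Moreover ker(ρ_0) consists exactly of the constant functions arising from a single element of M placed compatibly, i.e., ker ρ_0 ≅ M embedded diagonally. -/

import Mathlib

/-- The ℚ-vector space of functions from k-element subsets of {1,…,m} to M. -/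
def SimpCochain (m : ℕ) (M : Type*) (k : ℕ) : Type _ :=
  {s : Finset (Fin m) // s.card = k} → M

/-- The alternating-sign coboundary map ρ_k : C_k → C_{k+1},
ρ(ω)_I = Σ_{j ∈ I} (-1)^{pos(j,I)} ω_{I \ {j}}. -/
def simpRho {m : ℕ} {M : Type*} [AddCommGroup M] (k : ℕ)
    (ω : SimpCochain m M k) : SimpCochain m M (k + 1) := fun I =>
  ∑ j ∈ I.1.attach,
    ((-1 : ℤ) ^ ((I.1.filter (fun r => r < j.1)).card)) •
      ω ⟨I.1.erase j.1, by simp [Finset.card_erase_of_mem j.2, I.2]⟩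

/-- The homotopy operator h_k : C_k → C_{k-1},
h(ω)_J = Σ_{i ∉ J} (-1)^{|{r ∈ J : r > i}|} ω_{J ∪ {i}}. -/
def simpH {m : ℕ} {M : Type*} [AddCommGroup M] (k : ℕ)
    (ω : SimpCochain m M (k + 1)) : SimpCochain m M k := fun J =>
  ∑ i ∈ (J.1ᶜ).attach,
    ((-1 : ℤ) ^ ((J.1.filter (fun r => i.1 < r)).card)) •
      ω ⟨insert i.1 J.1, by
        rw [Finset.card_insert_of_notMem (Finset.mem_compl.mp i.2), J.2]⟩

namespace Stmt13

variable {m : ℕ} {M : Type*} [AddCommGroup M]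

def ext {k : ℕ} (ω : SimpCochain m M k) : Finset (Fin m) → M :=
  fun s => if h : s.card = k then ω ⟨s, h⟩ else 0

lemma ext_eq {k : ℕ} (ω : SimpCochain m M k) (s : Finset (Fin m)) (h : s.card = k) :
    ext ω s = ω ⟨s, h⟩ := dif_pos h

lemma rho_apply (k : ℕ) (ω : SimpCochain m M k) (I : {s : Finset (Fin m) // s.card = k + 1}) :
    simpRho k ω I = ∑ j ∈ I.1, ((-1 : ℤ) ^ ((I.1.filter (· < j)).card)) • ext ω (I.1.erase j) := by
  rw [← Finset.sum_attach I.1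
    (fun j => ((-1 : ℤ) ^ ((I.1.filter (· < j)).card)) • ext ω (I.1.erase j))]
  refine Finset.sum_congr rfl fun j _ => ?_
  rw [ext_eq ω _ (by simp [Finset.card_erase_of_mem j.2, I.2])]

lemma h_apply (k : ℕ) (ω : SimpCochain m M (k + 1)) (J : {s : Finset (Fin m) // s.card = k}) :
    simpH k ω J = ∑ i ∈ J.1ᶜ, ((-1 : ℤ) ^ ((J.1.filter (i < ·)).card)) • ext ω (insert i J.1) := by
  rw [← Finset.sum_attach J.1ᶜ
    (fun i => ((-1 : ℤ) ^ ((J.1.filter (i < ·)).card)) • ext ω (insert i J.1))]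
  refine Finset.sum_congr rfl fun i _ => ?_
  rw [ext_eq ω _ (by
    rw [Finset.card_insert_of_notMem (Finset.mem_compl.mp i.2), J.2])]

section signs
lemma filter_split (s : Finset (Fin m)) (i : Fin m) (hi : i ∉ s) :
    (s.filter (i < ·)).card + (s.filter (· < i)).card = s.card := by
  classical
  have h : s.filter (· < i) = s.filter (fun r => ¬ i < r) := by
    apply Finset.filter_congr
    intro x hx
    have hxi : x ≠ i := fun h => hi (h ▸ hx)
    simp only [not_lt]
    exact ⟨fun h => h.le, fun h => lt_of_le_of_ne h hxi⟩
  rw [h, Finset.card_filter_add_card_filter_not]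

lemma sign_cross (I : Finset (Fin m)) (i j : Fin m) (hi : i ∉ I) (hj : j ∈ I) :
    ((-1:ℤ) ^ ((I.filter (i < ·)).card)) * (-1) ^ (((insert i I).filter (· < j)).card)
      = ((-1:ℤ) ^ ((I.filter (· < j)).card)) * (-1) ^ (((I.erase j).filter (i < ·)).card) := by
  rw [Finset.filter_insert, Finset.filter_erase]
  by_cases h : i < j
  · rw [if_pos h, Finset.card_insert_of_notMem (fun hmem => hi (Finset.mem_filter.mp hmem).1)]
    have hjmem : j ∈ I.filter (i < ·) := Finset.mem_filter.mpr ⟨hj, h⟩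
    rw [Finset.card_erase_of_mem hjmem]
    have h1 : 1 ≤ (I.filter (i < ·)).card := Finset.card_pos.mpr ⟨j, hjmem⟩
    obtain ⟨n, hn⟩ := Nat.exists_eq_add_of_le h1
    have e : 1 + n - 1 = n := by omega
    rw [hn, e, pow_add, pow_succ]
    ring
  · rw [if_neg h]
    have hnm : j ∉ I.filter (i < ·) := fun hmem => h (Finset.mem_filter.mp hmem).2
    rw [Finset.erase_eq_of_notMem hnm]
    ring

lemma sign_diagA (I : Finset (Fin m)) (i : Fin m) (hi : i ∉ I) :
    ((-1:ℤ) ^ ((I.filter (i < ·)).card)) * (-1) ^ (((insert i I).filter (· < i)).card)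
      = (-1) ^ I.card := by
  rw [Finset.filter_insert, if_neg (lt_irrefl i), ← pow_add, filter_split I i hi]

lemma sign_diagB (I : Finset (Fin m)) (j : Fin m) (hj : j ∈ I) :
    ((-1:ℤ) ^ ((I.filter (· < j)).card)) * (-1) ^ (((I.erase j).filter (j < ·)).card)
      = (-1) ^ (I.card - 1) := by
  have h := filter_split (I.erase j) j (Finset.notMem_erase j I)
  rw [Finset.card_erase_of_mem hj] at h
  have h2 : (I.erase j).filter (· < j) = I.filter (· < j) := by
    have hnm : j ∉ I.filter (· < j) := by
      intro hmem
      exact lt_irrefl j (Finset.mem_filter.mp hmem).2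
    rw [Finset.filter_erase, Finset.erase_eq_of_notMem hnm]
  rw [← h2, ← pow_add, Nat.add_comm, h]

lemma sign_anti (I : Finset (Fin m)) (j l : Fin m) (hj : j ∈ I) (hjl : j < l) :
    ((-1:ℤ) ^ ((I.filter (· < j)).card)) * (-1) ^ (((I.erase j).filter (· < l)).card)
      = -(((-1:ℤ) ^ ((I.filter (· < l)).card)) * (-1) ^ (((I.erase l).filter (· < j)).card)) := by
  rw [Finset.filter_erase, Finset.filter_erase]
  have hjm : j ∈ I.filter (· < l) := Finset.mem_filter.mpr ⟨hj, hjl⟩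
  have hlnm : l ∉ I.filter (· < j) := by
    intro hmem
    exact absurd (Finset.mem_filter.mp hmem).2 (asymm hjl)
  rw [Finset.card_erase_of_mem hjm, Finset.erase_eq_of_notMem hlnm]
  have h1 : 1 ≤ (I.filter (· < l)).card := Finset.card_pos.mpr ⟨j, hjm⟩
  obtain ⟨n, hn⟩ := Nat.exists_eq_add_of_le h1
  have e : 1 + n - 1 = n := by omega
  rw [hn, e, pow_add, pow_succ]
  ring
end signs

lemma key (k : ℕ) (ω : SimpCochain m M (k + 1)) (I : {s : Finset (Fin m) // s.card = k + 1}) :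
    simpH (k + 1) (simpRho (k + 1) ω) I
      = simpRho k (simpH k ω) I + (((-1 : ℤ) ^ (k + 1)) * m) • ω I := by
  classical
  rw [h_apply, rho_apply]
  -- expand LHS inner terms
  have L1 : ∀ i ∈ I.1ᶜ,
      ((-1 : ℤ) ^ ((I.1.filter (i < ·)).card)) • ext (simpRho (k+1) ω) (insert i I.1)
        = (((-1 : ℤ) ^ ((I.1.filter (i < ·)).card)) * ((-1 : ℤ) ^ (((insert i I.1).filter (· < i)).card))) • ext ω I.1
          + ∑ j ∈ I.1, (((-1 : ℤ) ^ ((I.1.filter (i < ·)).card)) * ((-1 : ℤ) ^ (((insert i I.1).filter (· < j)).card))) • ext ω ((insert i I.1).erase j) := by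
    intro i hi
    have hi' : i ∉ I.1 := Finset.mem_compl.mp hi
    have hcard : (insert i I.1).card = (k + 1) + 1 := by
      rw [Finset.card_insert_of_notMem hi', I.2]
    rw [ext_eq _ _ hcard, rho_apply]
    simp only [Finset.sum_insert hi', smul_add, Finset.smul_sum, smul_smul,
      Finset.erase_insert hi']
  rw [Finset.sum_congr rfl L1, Finset.sum_add_distrib]
  have hIc : ∀ i ∈ I.1ᶜ,
      (((-1 : ℤ) ^ ((I.1.filter (i < ·)).card)) * ((-1 : ℤ) ^ (((insert i I.1).filter (· < i)).card))) • ext ω I.1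
        = ((-1 : ℤ) ^ (k+1)) • ω I := by
    intro i hi
    rw [sign_diagA I.1 i (Finset.mem_compl.mp hi), I.2, ext_eq _ _ I.2]
  rw [Finset.sum_congr rfl hIc, Finset.sum_const]
  have hcrossL : ∀ i ∈ I.1ᶜ,
      ∑ j ∈ I.1, (((-1 : ℤ) ^ ((I.1.filter (i < ·)).card)) * ((-1 : ℤ) ^ (((insert i I.1).filter (· < j)).card))) • ext ω ((insert i I.1).erase j)
        = ∑ j ∈ I.1, (((-1 : ℤ) ^ ((I.1.filter (· < j)).card)) * ((-1 : ℤ) ^ (((I.1.erase j).filter (i < ·)).card))) • ext ω (insert i (I.1.erase j)) := by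
    intro i hi
    refine Finset.sum_congr rfl fun j hj => ?_
    have hi' : i ∉ I.1 := Finset.mem_compl.mp hi
    have hij : i ≠ j := fun h => hi' (h ▸ hj)
    rw [sign_cross I.1 i j hi' hj, Finset.erase_insert_of_ne hij]
  rw [Finset.sum_congr rfl hcrossL, Finset.sum_comm]
  have R1 : ∀ j ∈ I.1,
      ((-1 : ℤ) ^ ((I.1.filter (· < j)).card)) • ext (simpH k ω) (I.1.erase j)
        = ((-1 : ℤ) ^ k) • ω I
          + ∑ i ∈ I.1ᶜ, (((-1 : ℤ) ^ ((I.1.filter (· < j)).card)) * ((-1 : ℤ) ^ (((I.1.erase j).filter (i < ·)).card))) • ext ω (insert i (I.1.erase j)) := by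
    intro j hj
    have hcard : (I.1.erase j).card = k := by
      rw [Finset.card_erase_of_mem hj, I.2]
      omega
    have hjc : j ∉ I.1ᶜ := by simp [hj]
    rw [ext_eq _ _ hcard, h_apply]
    simp only [Finset.compl_erase, Finset.sum_insert hjc, smul_add, Finset.smul_sum, smul_smul,
      Finset.insert_erase hj]
    congr 1
    rw [sign_diagB I.1 j hj, I.2, ext_eq _ _ I.2]
    norm_num
  rw [Finset.sum_congr rfl R1, Finset.sum_add_distrib, Finset.sum_const]
  have hle : k + 1 ≤ m := by
    have h := Finset.card_le_univ I.1
    rwa [I.2, Fintype.card_fin] at h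
  have hcc : I.1ᶜ.card = m - (k+1) := by
    rw [Finset.card_compl, Fintype.card_fin, I.2]
  have hcoef : ((I.1ᶜ.card : ℤ)) * (-1)^(k+1) = ((I.1.card : ℤ)) * (-1)^k + (-1)^(k+1) * m := by
    rw [hcc, I.2]
    push_cast [hle]
    rw [pow_succ]
    ring
  have key2 : (I.1ᶜ.card) • ((-1:ℤ)^(k+1) • ω I)
      = (I.1.card) • ((-1:ℤ)^k • ω I) + ((-1:ℤ)^(k+1) * (m:ℤ)) • ω I := by
    rw [← natCast_zsmul, ← natCast_zsmul, smul_smul, smul_smul, hcoef, add_smul]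
  rw [key2]
  abel

lemma rho_rho [Module ℚ M] (k : ℕ) (η : SimpCochain m M k)
    (I : {s : Finset (Fin m) // s.card = (k + 1) + 1}) :
    simpRho (k + 1) (simpRho k η) I = 0 := by
  classical
  rw [rho_apply]
  have E : ∀ j ∈ I.1,
      ((-1:ℤ) ^ ((I.1.filter (· < j)).card)) • ext (simpRho k η) (I.1.erase j)
        = ∑ l ∈ I.1.erase j,
            (((-1:ℤ) ^ ((I.1.filter (· < j)).card))
              * ((-1:ℤ) ^ (((I.1.erase j).filter (· < l)).card))) •
              ext η ((I.1.erase j).erase l) := by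
    intro j hj
    have hcard : (I.1.erase j).card = k + 1 := by
      rw [Finset.card_erase_of_mem hj, I.2]
      omega
    rw [ext_eq _ _ hcard, rho_apply]
    simp only [Finset.smul_sum, smul_smul]
  rw [Finset.sum_congr rfl E]
  set g : Fin m → Fin m → M := fun j l =>
    (((-1:ℤ) ^ ((I.1.filter (· < j)).card))
      * ((-1:ℤ) ^ (((I.1.erase j).filter (· < l)).card))) •
      ext η ((I.1.erase j).erase l) with hg
  have hanti : ∀ j ∈ I.1, ∀ l ∈ I.1.erase j, g l j = - g j l := by
    intro j hj l hl
    obtain ⟨hlj, hlI⟩ := Finset.mem_erase.mp hl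
    rcases lt_or_gt_of_ne (Ne.symm hlj) with h | h
    · have hset : (I.1.erase j).erase l = (I.1.erase l).erase j := Finset.erase_right_comm
      simp only [hg]
      rw [hset, sign_anti I.1 j l hj h, neg_smul, neg_neg]
    · have hset : (I.1.erase l).erase j = (I.1.erase j).erase l := Finset.erase_right_comm
      simp only [hg]
      rw [hset, sign_anti I.1 l j hlI h, neg_smul]
  have hswap : ∑ j ∈ I.1, ∑ l ∈ I.1.erase j, g j l = ∑ l ∈ I.1, ∑ j ∈ I.1.erase l, g j l :=
    Finset.sum_comm' (by
      intro x y
      simp only [Finset.mem_erase]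
      constructor
      · rintro ⟨hx, hyx, hy⟩; exact ⟨⟨(Ne.symm hyx : x ≠ y), hx⟩, hy⟩
      · rintro ⟨⟨hxy, hx⟩, hy⟩; exact ⟨hx, Ne.symm hxy, hy⟩)
  have hneg : ∑ j ∈ I.1, ∑ l ∈ I.1.erase j, g j l
      = - ∑ j ∈ I.1, ∑ l ∈ I.1.erase j, g j l := by
    conv_lhs => rw [hswap]
    rw [← Finset.sum_neg_distrib]
    refine Finset.sum_congr rfl fun j hj => ?_
    rw [← Finset.sum_neg_distrib]
    exact Finset.sum_congr rfl fun l hl => hanti j hj l hl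
  have h2 : ((2:ℚ)) • (∑ j ∈ I.1, ∑ l ∈ I.1.erase j, g j l) = 0 := by
    rw [two_smul]
    nth_rewrite 2 [hneg]
    simp
  have h3 := congrArg (fun x => (2:ℚ)⁻¹ • x) h2
  simpa [smul_smul] using h3

lemma ext_smul [Module ℚ M] {k : ℕ} (c : ℚ) (η : SimpCochain m M k) (s : Finset (Fin m)) :
    ext (fun J => c • η J : SimpCochain m M k) s = c • ext η s := by
  unfold ext
  split
  · rfl
  · rw [smul_zero]

lemma rho_smul [Module ℚ M] (k : ℕ) (c : ℚ) (η : SimpCochain m M k)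
    (I : {s : Finset (Fin m) // s.card = k + 1}) :
    simpRho k (fun J => c • η J) I = c • simpRho k η I := by
  rw [rho_apply k (fun J => c • η J : SimpCochain m M k) I, rho_apply k η I, Finset.smul_sum]
  refine Finset.sum_congr rfl fun j hj => ?_
  rw [ext_smul, ← Int.cast_smul_eq_zsmul ℚ, ← Int.cast_smul_eq_zsmul ℚ, smul_smul, smul_smul,
    mul_comm]

lemma h_zero (k : ℕ) (J : {s : Finset (Fin m) // s.card = k}) :
    simpH k (fun _ => (0:M) : SimpCochain m M (k+1)) J = 0 := by
  unfold simpH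
  simp

lemma rho1 (ω : SimpCochain m M 1) (x y : Fin m) (hxy : x < y)
    (h2 : ({x,y} : Finset (Fin m)).card = 1 + 1) :
    simpRho 1 ω ⟨{x,y}, h2⟩
      = ω ⟨{y}, Finset.card_singleton y⟩ - ω ⟨{x}, Finset.card_singleton x⟩ := by
  have hne : x ≠ y := ne_of_lt hxy
  rw [rho_apply, Finset.sum_pair hne]
  have e1 : ({x,y} : Finset (Fin m)).erase x = {y} := by
    rw [Finset.erase_insert (by simp [hne])]
  have e2 : ({x,y} : Finset (Fin m)).erase y = {x} := by
    rw [Finset.erase_insert_of_ne hne, Finset.erase_singleton]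
    rfl
  have f1 : (({x,y} : Finset (Fin m)).filter (· < x)).card = 0 := by
    rw [Finset.filter_insert, if_neg (lt_irrefl x), Finset.filter_singleton,
      if_neg (asymm hxy)]
    rfl
  have f2 : (({x,y} : Finset (Fin m)).filter (· < y)).card = 1 := by
    rw [Finset.filter_insert, if_pos hxy, Finset.filter_singleton, if_neg (lt_irrefl y)]
    rfl
  rw [e1, e2, f1, f2, ext_eq _ _ (Finset.card_singleton y), ext_eq _ _ (Finset.card_singleton x)]
  rw [pow_zero, pow_one, one_smul, sub_eq_add_neg, neg_smul, one_smul]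

end Stmt13

/-- Exactness of the simplicial cochain complex in intermediate degrees, and
identification of the kernel at the first level with the diagonally embedded
copy of M (the constant functions). -/
theorem stmt13 {m : ℕ} (hm : 1 ≤ m) {M : Type*} [AddCommGroup M] [Module ℚ M] :
    (∀ j : ℕ, 1 ≤ j + 1 → j + 1 ≤ m - 1 → ∀ ω : SimpCochain m M (j + 1),
      (simpRho (j + 1) ω = fun _ => (0 : M)) ↔ ∃ η : SimpCochain m M j, simpRho j η = ω) ∧
    (∀ ω : SimpCochain m M 1,
      (simpRho 1 ω = fun _ => (0 : M)) ↔ ∃ a : M, ∀ I, ω I = a) := by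
  constructor
  · intro j _ _ ω
    constructor
    · intro h0
      have hmq : ((m:ℚ)) ≠ 0 := Nat.cast_ne_zero.mpr (by omega)
      have hne0 : (-(((-1:ℚ)^(j+1)) * m)) ≠ 0 := by
        simp [hmq]
      refine ⟨fun J => (-(((-1:ℚ)^(j+1)) * m))⁻¹ • simpH j ω J, ?_⟩
      funext I
      rw [Stmt13.rho_smul]
      have hk := Stmt13.key j ω I
      rw [h0, Stmt13.h_zero] at hk
      have h1 : simpRho j (simpH j ω) I = (-(((-1:ℤ)^(j+1)) * m)) • ω I := by
        have h2 := eq_neg_of_add_eq_zero_right hk.symm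
        rw [neg_smul, h2, neg_neg]
      have hcast : ((-((-1:ℤ)^(j+1) * (m:ℤ)) : ℤ) : ℚ) = -(((-1:ℚ)^(j+1)) * m) := by
        push_cast
        ring
      rw [h1, ← Int.cast_smul_eq_zsmul ℚ, smul_smul, hcast, inv_mul_cancel₀ hne0, one_smul]
    · rintro ⟨η, rfl⟩
      funext I
      exact Stmt13.rho_rho j η I
  · intro ω
    constructor
    · intro h0
      have h00 : ∀ I : {s : Finset (Fin m) // s.card = 1 + 1}, simpRho 1 ω I = 0 :=
        fun I => congrFun h0 I
      refine ⟨ω ⟨{(⟨0, hm⟩ : Fin m)}, Finset.card_singleton _⟩, ?_⟩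
      have key2 : ∀ x y : Fin m, x < y →
          ω ⟨{x}, Finset.card_singleton x⟩ = ω ⟨{y}, Finset.card_singleton y⟩ := by
        intro x y h
        have h2 : ({x,y} : Finset (Fin m)).card = 1 + 1 := by
          rw [Finset.card_pair (ne_of_lt h)]
        have hr := Stmt13.rho1 ω x y h h2
        rw [h00 ⟨{x,y}, h2⟩] at hr
        exact (sub_eq_zero.mp hr.symm).symm
      have hsing : ∀ x y : Fin m,
          ω ⟨{x}, Finset.card_singleton x⟩ = ω ⟨{y}, Finset.card_singleton y⟩ := by
        intro x y
        rcases lt_trichotomy x y with h|h|h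
        · exact key2 x y h
        · subst h; rfl
        · exact (key2 y x h).symm
      intro I
      obtain ⟨i, hi⟩ := Finset.card_eq_one.mp I.2
      have hIe : I = ⟨{i}, Finset.card_singleton i⟩ := Subtype.ext hi
      rw [hIe]
      exact hsing i ⟨0, hm⟩
    · rintro ⟨a, ha⟩
      funext I
      show simpRho 1 ω I = 0
      have hc2 : I.1.card = 2 := I.2
      obtain ⟨x, y, hne, hxy⟩ := Finset.card_eq_two.mp hc2
      rcases lt_or_gt_of_ne hne with h|h
      · have hI : I = ⟨{x,y}, by rw [← hxy]; exact I.2⟩ := Subtype.ext hxy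
        rw [hI, Stmt13.rho1 ω x y h, ha, ha, sub_self]
      · have hpair : ({x,y} : Finset (Fin m)) = {y,x} := Finset.pair_comm x y
        have hI2 : I = ⟨{y,x}, by rw [← hpair, ← hxy]; exact I.2⟩ :=
          Subtype.ext (hxy.trans hpair)
        rw [hI2, Stmt13.rho1 ω y x h, ha, ha, sub_self]
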